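/- Let $r,t>0$ and let $a,\nu>0$. Then $\int_{|t-r|}^{t+r} \frac{(1+y)^{-a-\nu}}{(r-t+y)^{1-a}}\,dy \leq C(a,\nu)\, r^a (1+t+r)^{-a}(1+|t-r|)^{-\nu}$ for some constant $C(a,\nu)$ depending only on $a$ and $\nu$. -/

import Mathlib

open MeasureTheory Real intervalIntegral

set_option maxHeartbeats 1000000 in
theorem stmt_0 (a ν : ℝ) (ha : 0 < a) (hν : 0 < ν) :
    ∃ C : ℝ, 0 < C ∧ ∀ r t : ℝ, 0 < r → 0 < t →
      (∫ y in (|t - r|)..(t + r), (1 + y) ^ (-(a + ν)) / (r - t + y) ^ (1 - a)) ≤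
        C * r ^ a * (1 + t + r) ^ (-a) * (1 + |t - r|) ^ (-ν) := by
  refine ⟨4 ^ a * (1 / a + 2 / ν), by positivity, fun r t hr ht => ?_⟩
  set d : ℝ := t - r with hd
  set b : ℝ := |d| with hbdef
  set S : ℝ := 1 + t + r with hSdef
  have hdb : d ≤ b := le_abs_self _
  have hb0 : 0 ≤ b := abs_nonneg _
  have hblt : b < t + r := by
    rw [hbdef, hd]; exact abs_lt.mpr ⟨by linarith, by linarith⟩
  have hS0 : 0 < S := by rw [hSdef]; linarith
  set B : ℝ := 1 + b with hBdef
  have hB0 : 0 < B := by rw [hBdef]; linarith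
  have hB1 : 1 ≤ B := by rw [hBdef]; linarith
  set u0 : ℝ := 4 * r * B / S with hu0
  have hu0pos : 0 < u0 := by rw [hu0]; positivity
  set ys : ℝ := u0 + d with hys
  have hbys : b < ys := by
    rw [hys, hu0, hBdef, hbdef, hd, hSdef]
    rw [← sub_lt_iff_lt_add, lt_div_iff₀ (by rw [hSdef] at hS0; exact hS0)]
    rcases abs_cases (t - r) with ⟨he, h0⟩ | ⟨he, h0⟩ <;> rw [he] <;> nlinarith [sq_nonneg (t - r)]
  set y0 : ℝ := min ys (t + r) with hy0def
  have hby0 : b ≤ y0 := le_min hbys.le hblt.le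
  have hy0tr : y0 ≤ t + r := min_le_right _ _
  have hy0ys : y0 ≤ ys := min_le_left _ _
  -- key linear inequality
  have key : ∀ y : ℝ, b ≤ y → y ≤ t + r → S * (y - d) ≤ 4 * r * (1 + y) := by
    intro y hy1 hy2
    rw [hbdef, hd] at hy1
    rw [hSdef, hd]
    rcases abs_cases (t - r) with ⟨he, h0⟩ | ⟨he, h0⟩ <;> rw [he] at hy1 <;>
      nlinarith [mul_nonneg (sub_nonneg.2 hy1) (sub_nonneg.2 hy2), sq_nonneg (t - r),
        mul_pos hr ht, mul_pos hr hr]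
  -- replace integrand by F
  set F : ℝ → ℝ := fun y => (1 + y) ^ (-(a + ν)) * (y - d) ^ (a - 1) with hF
  have hcong : (∫ y in b..(t + r), (1 + y) ^ (-(a + ν)) / (r - t + y) ^ (1 - a))
      = ∫ y in b..(t + r), F y := by
    apply integral_congr
    intro y hy
    rw [Set.uIcc_of_le hblt.le] at hy
    obtain ⟨hy1, hy2⟩ := hy
    have h1 : r - t + y = y - d := by rw [hd]; ring
    have h2 : (0:ℝ) ≤ y - d := by linarith
    show (1 + y) ^ (-(a + ν)) / (r - t + y) ^ (1 - a)
        = (1 + y) ^ (-(a + ν)) * (y - d) ^ (a - 1)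
    rw [h1, div_eq_mul_inv, ← Real.rpow_neg h2, show -(1 - a) = a - 1 by ring]
  -- integrability
  have hgfull : IntervalIntegrable (fun y => (y - d) ^ (a - 1)) volume b (t + r) := by
    have := (intervalIntegrable_rpow' (a := b - d) (b := t + r - d) (r := a - 1)
      (by linarith)).comp_sub_right d
    simpa using this
  have hFm : ∀ c e : ℝ, AEStronglyMeasurable F (volume.restrict (Set.uIoc c e)) := by
    intro c e
    apply Measurable.aestronglyMeasurable
    rw [hF]
    fun_prop
  have hFint : IntervalIntegrable F volume b (t + r) := by
    apply hgfull.mono_fun (hFm _ _)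
    filter_upwards [ae_restrict_mem measurableSet_uIoc] with y hy
    rw [Set.uIoc_of_le hblt.le] at hy
    have h1y : (1:ℝ) ≤ 1 + y := by linarith [hy.1]
    have hyd : (0:ℝ) ≤ y - d := by linarith [hy.1]
    have hF0 : 0 ≤ F y := by
      rw [hF]; exact mul_nonneg (Real.rpow_nonneg (by linarith) _) (Real.rpow_nonneg hyd _)
    rw [Real.norm_eq_abs, Real.norm_eq_abs, abs_of_nonneg hF0,
      abs_of_nonneg (Real.rpow_nonneg hyd _)]
    rw [hF]
    exact mul_le_of_le_one_left (Real.rpow_nonneg hyd _)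
      (Real.rpow_le_one_of_one_le_of_nonpos h1y (by linarith))
  have hint1 : IntervalIntegrable F volume b y0 := by
    apply hFint.mono_set'
    rw [Set.uIoc_of_le hblt.le, Set.uIoc_of_le hby0]
    exact Set.Ioc_subset_Ioc_right hy0tr
  have hint2 : IntervalIntegrable F volume y0 (t + r) := by
    apply hFint.mono_set'
    rw [Set.uIoc_of_le hblt.le, Set.uIoc_of_le hy0tr]
    exact Set.Ioc_subset_Ioc_left hby0
  -- piece 1
  have hg1 : IntervalIntegrable (fun y => B ^ (-(a + ν)) * (y - d) ^ (a - 1)) volume b y0 := by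
    apply IntervalIntegrable.const_mul
    apply hgfull.mono_set'
    rw [Set.uIoc_of_le hblt.le, Set.uIoc_of_le hby0]
    exact Set.Ioc_subset_Ioc_right hy0tr
  have hI1 : (∫ y in b..y0, F y) ≤ B ^ (-(a + ν)) * (u0 ^ a / a) := by
    have hmono : (∫ y in b..y0, F y) ≤ ∫ y in b..y0, B ^ (-(a + ν)) * (y - d) ^ (a - 1) := by
      apply integral_mono_on hby0 hint1 hg1
      intro y hy
      show (1 + y) ^ (-(a + ν)) * (y - d) ^ (a - 1) ≤ B ^ (-(a + ν)) * (y - d) ^ (a - 1)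
      apply mul_le_mul_of_nonneg_right _ (Real.rpow_nonneg (by linarith [hy.1]) _)
      exact Real.rpow_le_rpow_of_nonpos hB0 (by rw [hBdef]; linarith [hy.1]) (by linarith)
    refine hmono.trans ?_
    rw [intervalIntegral.integral_const_mul, integral_comp_sub_right (fun x => x ^ (a - 1)) d,
      integral_rpow (Or.inl (by linarith)), show a - 1 + 1 = a by ring]
    apply mul_le_mul_of_nonneg_left _ (Real.rpow_nonneg hB0.le _)
    have h1 : (y0 - d) ^ a ≤ u0 ^ a :=
      Real.rpow_le_rpow (by linarith) (by linarith [hy0ys]) ha.le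
    have h2 : (0:ℝ) ≤ (b - d) ^ a := Real.rpow_nonneg (by linarith) _
    have h3 : (y0 - d) ^ a - (b - d) ^ a ≤ u0 ^ a := by linarith
    gcongr
  -- piece 2
  have hI2 : (∫ y in y0..(t + r), F y)
      ≤ B ^ (-(ν / 2)) * (S / (4 * r)) ^ (-(a + ν / 2)) * (2 / ν * u0 ^ (-(ν / 2))) := by
    rcases le_or_gt ys (t + r) with hc | hc
    · have hy0eq : y0 = ys := min_eq_left hc
      set K : ℝ := B ^ (-(ν / 2)) * (S / (4 * r)) ^ (-(a + ν / 2)) with hK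
      have hK0 : 0 ≤ K := by rw [hK]; positivity
      have hnm : (0:ℝ) ∉ Set.uIcc u0 (2 * r) :=
        Set.notMem_uIcc_of_lt hu0pos (by linarith)
      have hne : (-1 - ν / 2 : ℝ) ≠ -1 := by intro h; nlinarith
      have hg2 : IntervalIntegrable (fun y => K * (y - d) ^ (-1 - ν / 2)) volume y0 (t + r) := by
        apply IntervalIntegrable.const_mul
        have h1 : IntervalIntegrable (fun x : ℝ => x ^ (-1 - ν / 2)) volume (y0 - d) (t + r - d) := by
          apply intervalIntegrable_rpow (Or.inr ?_)
          rw [show y0 - d = u0 by rw [hy0eq, hys]; ring, show t + r - d = 2 * r by rw [hd]; ring]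
          exact hnm
        simpa using h1.comp_sub_right d
      have hmono : (∫ y in y0..(t + r), F y)
          ≤ ∫ y in y0..(t + r), K * (y - d) ^ (-1 - ν / 2) := by
        apply integral_mono_on hy0tr hint2 hg2
        intro y hy
        have hyd : u0 ≤ y - d := by
          have h5 : ys ≤ y := by rw [← hy0eq]; exact hy.1
          rw [hys] at h5; linarith
        have hyd0 : (0:ℝ) < y - d := lt_of_lt_of_le hu0pos hyd
        have hby : b ≤ y := le_trans hby0 hy.1
        have h1y : (0:ℝ) < 1 + y := by linarith
        have hkey := key y hby hy.2
        have hq : S / (4 * r) * (y - d) ≤ 1 + y := by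
          rw [div_mul_eq_mul_div, div_le_iff₀ (by linarith)]
          calc S * (y - d) ≤ 4 * r * (1 + y) := hkey
            _ = (1 + y) * (4 * r) := by ring
        have hq0 : (0:ℝ) < S / (4 * r) * (y - d) := by positivity
        show (1 + y) ^ (-(a + ν)) * (y - d) ^ (a - 1) ≤ K * (y - d) ^ (-1 - ν / 2)
        calc (1 + y) ^ (-(a + ν)) * (y - d) ^ (a - 1)
            = (1 + y) ^ (-(ν / 2)) * (1 + y) ^ (-(a + ν / 2)) * (y - d) ^ (a - 1) := by
              rw [← Real.rpow_add h1y, show -(ν / 2) + -(a + ν / 2) = -(a + ν) by ring]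
          _ ≤ B ^ (-(ν / 2)) * (S / (4 * r) * (y - d)) ^ (-(a + ν / 2)) * (y - d) ^ (a - 1) := by
              apply mul_le_mul_of_nonneg_right _ (Real.rpow_nonneg hyd0.le _)
              apply mul_le_mul
              · exact Real.rpow_le_rpow_of_nonpos hB0 (by rw [hBdef]; linarith) (by linarith)
              · exact Real.rpow_le_rpow_of_nonpos hq0 hq (by linarith)
              · exact Real.rpow_nonneg h1y.le _
              · exact Real.rpow_nonneg hB0.le _
          _ = K * (y - d) ^ (-1 - ν / 2) := by
              rw [hK, Real.mul_rpow (by positivity) hyd0.le, mul_assoc, mul_assoc,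
                ← Real.rpow_add hyd0, show -(a + ν / 2) + (a - 1) = -1 - ν / 2 by ring]
              ring
      refine hmono.trans ?_
      rw [intervalIntegral.integral_const_mul, integral_comp_sub_right (fun x => x ^ (-1 - ν / 2)) d]
      rw [show y0 - d = u0 by rw [hy0eq, hys]; ring, show t + r - d = 2 * r by rw [hd]; ring]
      rw [integral_rpow (Or.inr ⟨hne, hnm⟩), show -1 - ν / 2 + 1 = -(ν / 2) by ring]
      have h2r : (0:ℝ) ≤ (2 * r) ^ (-(ν / 2)) := Real.rpow_nonneg (by linarith) _
      have hu0n : (0:ℝ) ≤ u0 ^ (-(ν / 2)) := Real.rpow_nonneg hu0pos.le _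
      have hfrac : ((2 * r) ^ (-(ν / 2)) - u0 ^ (-(ν / 2))) / -(ν / 2)
          ≤ 2 / ν * u0 ^ (-(ν / 2)) := by
        rw [div_le_iff_of_neg (by linarith : -(ν / 2) < 0)]
        have hcancel : 2 / ν * u0 ^ (-(ν / 2)) * -(ν / 2) = -(u0 ^ (-(ν / 2))) := by
          field_simp
        rw [hcancel]
        linarith
      calc K * (((2 * r) ^ (-(ν / 2)) - u0 ^ (-(ν / 2))) / -(ν / 2))
          ≤ K * (2 / ν * u0 ^ (-(ν / 2))) := mul_le_mul_of_nonneg_left hfrac hK0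
        _ = B ^ (-(ν / 2)) * (S / (4 * r)) ^ (-(a + ν / 2)) * (2 / ν * u0 ^ (-(ν / 2))) := by
            rw [hK]
    · have hy0eq : y0 = t + r := min_eq_right hc.le
      rw [hy0eq, integral_same]
      positivity
  -- assemble
  rw [hcong, ← integral_add_adjacent_intervals hint1 hint2]
  have hsum := add_le_add hI1 hI2
  refine le_trans hsum (le_of_eq ?_)
  -- final algebra
  have h4r : (0:ℝ) < 4 * r := by linarith
  have e1 : u0 ^ a = (4:ℝ) ^ a * r ^ a * B ^ a / S ^ a := by
    rw [hu0, Real.div_rpow (by positivity) hS0.le,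
      Real.mul_rpow (by positivity) hB0.le, Real.mul_rpow (by norm_num) hr.le]
  have e3 : u0 ^ (-(ν / 2)) = S ^ (ν / 2) / ((4:ℝ) ^ (ν / 2) * r ^ (ν / 2) * B ^ (ν / 2)) := by
    rw [hu0, Real.rpow_neg (by positivity), Real.div_rpow (by positivity) hS0.le,
      Real.mul_rpow (by positivity) hB0.le, Real.mul_rpow (by norm_num) hr.le, inv_div]
  have e4 : (S / (4 * r)) ^ (-(a + ν / 2))
      = ((4:ℝ) ^ a * r ^ a * ((4:ℝ) ^ (ν / 2) * r ^ (ν / 2))) / (S ^ a * S ^ (ν / 2)) := by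
    rw [Real.rpow_neg (by positivity), Real.div_rpow hS0.le h4r.le,
      Real.rpow_add hS0, Real.rpow_add h4r,
      Real.mul_rpow (by norm_num) hr.le, Real.mul_rpow (by norm_num) hr.le, inv_div]
  have e5 : B ^ (-(a + ν)) = (B ^ a * (B ^ (ν / 2) * B ^ (ν / 2)))⁻¹ := by
    rw [Real.rpow_neg hB0.le, show a + ν = a + (ν / 2 + ν / 2) by ring,
      Real.rpow_add hB0, Real.rpow_add hB0]
  have e6 : B ^ (-(ν / 2)) = (B ^ (ν / 2))⁻¹ := Real.rpow_neg hB0.le _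
  have e7 : S ^ (-a) = (S ^ a)⁻¹ := Real.rpow_neg hS0.le _
  have e8 : B ^ (-ν) = (B ^ (ν / 2) * B ^ (ν / 2))⁻¹ := by
    rw [← Real.rpow_add hB0, ← Real.rpow_neg hB0.le, show -(ν / 2 + ν / 2) = -ν by ring]
  rw [e1, e3, e4, e5, e6, e7, e8]
  have p1 : (0:ℝ) < B ^ a := Real.rpow_pos_of_pos hB0 _
  have p2 : (0:ℝ) < B ^ (ν / 2) := Real.rpow_pos_of_pos hB0 _
  have p3 : (0:ℝ) < S ^ a := Real.rpow_pos_of_pos hS0 _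
  have p4 : (0:ℝ) < S ^ (ν / 2) := Real.rpow_pos_of_pos hS0 _
  have p5 : (0:ℝ) < (4:ℝ) ^ a := Real.rpow_pos_of_pos (by norm_num) _
  have p6 : (0:ℝ) < (4:ℝ) ^ (ν / 2) := Real.rpow_pos_of_pos (by norm_num) _
  have p7 : (0:ℝ) < r ^ a := Real.rpow_pos_of_pos hr _
  have p8 : (0:ℝ) < r ^ (ν / 2) := Real.rpow_pos_of_pos hr _
  field_simp
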